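/- arXiv:2007.06628 — 2 statements merged into one kernel-verified Lean document; each statement's English description precedes it below -/
import Mathlib

section
/- Let A be SPD with entrywise absolute value |A|, and suppose |Δ| ≤ ε|A| entrywise with Δ symmetric, where κ̲(A)·ε < 1 and κ̲(A) = ‖|A|‖·‖A^{-1}‖. Then A + Δ is symmetric positive definite. -/
open Matrix

noncomputable def opNorm {n m : ℕ} (A : Matrix (Fin n) (Fin m) ℝ) : ℝ :=
  ‖LinearMap.toContinuousLinearMap (Matrix.toEuclideanLin A)‖

noncomputable def vnorm {n : ℕ} (x : Fin n → ℝ) : ℝ := Real.sqrt (∑ i, x i ^ 2)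

noncomputable def enorm {n : ℕ} (A : Matrix (Fin n) (Fin n) ℝ) (x : Fin n → ℝ) : ℝ :=
  Real.sqrt (x ⬝ᵥ A.mulVec x)

lemma dot_mulVec_le_opNorm {n : ℕ} (M : Matrix (Fin n) (Fin n) ℝ) (x : Fin n → ℝ) :
    x ⬝ᵥ M.mulVec x ≤ opNorm M * (x ⬝ᵥ x) := by
  set e : EuclideanSpace ℝ (Fin n) := (WithLp.equiv 2 _).symm x with he
  have h1 : x ⬝ᵥ M.mulVec x = inner ℝ e (Matrix.toEuclideanLin M e) := by
    simp [PiLp.inner_apply, dotProduct, he, Matrix.toEuclideanLin_apply, mulVec, mul_comm]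
  have h3 : ‖Matrix.toEuclideanLin M e‖ ≤ opNorm M * ‖e‖ :=
    (LinearMap.toContinuousLinearMap (Matrix.toEuclideanLin M)).le_opNorm e
  have h4 : (x ⬝ᵥ x) = ‖e‖ * ‖e‖ := by
    rw [← real_inner_self_eq_norm_mul_norm]
    simp only [PiLp.inner_apply, dotProduct, he]
    simp [sq]
  calc x ⬝ᵥ M.mulVec x = inner ℝ e (Matrix.toEuclideanLin M e) := h1
    _ ≤ ‖e‖ * ‖Matrix.toEuclideanLin M e‖ := real_inner_le_norm _ _
    _ ≤ ‖e‖ * (opNorm M * ‖e‖) := mul_le_mul_of_nonneg_left h3 (norm_nonneg e)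
    _ = opNorm M * (‖e‖ * ‖e‖) := by ring
    _ = opNorm M * (x ⬝ᵥ x) := by rw [h4]

open scoped MatrixOrder in
lemma psd_cauchy_schwarz {n : ℕ} {A : Matrix (Fin n) (Fin n) ℝ} (hA : A.PosSemidef)
    (x y : Fin n → ℝ) :
    (x ⬝ᵥ A.mulVec y) ^ 2 ≤ (x ⬝ᵥ A.mulVec x) * (y ⬝ᵥ A.mulVec y) := by
  set S := CFC.sqrt A with hS
  have hsym : Sᵀ = S := by
    have h := (CFC.sqrt_nonneg A).posSemidef.1
    simpa [Matrix.IsHermitian] using h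
  have key : ∀ u v : Fin n → ℝ, u ⬝ᵥ A.mulVec v = (S.mulVec u) ⬝ᵥ (S.mulVec v) := by
    intro u v
    rw [← CFC.sqrt_mul_sqrt_self A hA.nonneg, ← Matrix.mulVec_mulVec, Matrix.dotProduct_mulVec,
      ← Matrix.mulVec_transpose, hsym]
  rw [key x y, key x x, key y y]
  have := Finset.sum_mul_sq_le_sq_mul_sq Finset.univ (S.mulVec x) (S.mulVec y)
  simpa [dotProduct, sq] using this

lemma quant_abs_dot_le {n : ℕ} (A Δ : Matrix (Fin n) (Fin n) ℝ) (ε : ℝ)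
    (hdom : ∀ i j, |Δ i j| ≤ ε * |A i j|) (x : Fin n → ℝ) :
    |x ⬝ᵥ Δ.mulVec x| ≤
      ε * ((fun i => |x i|) ⬝ᵥ (A.map (fun a => |a|)).mulVec (fun i => |x i|)) := by
  calc |x ⬝ᵥ Δ.mulVec x| = |∑ i, ∑ j, x i * (Δ i j * x j)| := by
        simp [dotProduct, mulVec, Finset.mul_sum]
    _ ≤ ∑ i, |∑ j, x i * (Δ i j * x j)| := Finset.abs_sum_le_sum_abs _ _
    _ ≤ ∑ i, ∑ j, |x i * (Δ i j * x j)| := by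
        gcongr with i _
        exact Finset.abs_sum_le_sum_abs _ _
    _ ≤ ∑ i, ∑ j, |x i| * (ε * |A i j| * |x j|) := by
        apply Finset.sum_le_sum; intro i _
        apply Finset.sum_le_sum; intro j _
        rw [abs_mul, abs_mul]
        exact mul_le_mul_of_nonneg_left
          (mul_le_mul_of_nonneg_right (hdom i j) (abs_nonneg _)) (abs_nonneg _)
    _ = ε * ((fun i => |x i|) ⬝ᵥ (A.map (fun a => |a|)).mulVec (fun i => |x i|)) := by
        simp only [dotProduct, mulVec, Matrix.map_apply, Finset.mul_sum]
        apply Finset.sum_congr rfl; intro j _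
        apply Finset.sum_congr rfl; intro i _
        ring

/-- entrywise quantization |Δ| ≤ ε|A| with κ̲(A)·ε < 1 keeps A + Δ SPD,
where κ̲(A) = ‖|A|‖·‖A⁻¹‖. -/
theorem posDef_of_entrywise_quantization {n : ℕ}
    (A Δ : Matrix (Fin n) (Fin n) ℝ) (ε : ℝ)
    (hA : A.PosDef) (hΔ : Δ.IsSymm)
    (hdom : ∀ i j, |Δ i j| ≤ ε * |A i j|)
    (hκ : opNorm (A.map (fun a => |a|)) * opNorm A⁻¹ * ε < 1) :
    (A + Δ).PosDef := by
  have hΔh : Δ.IsHermitian := by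
    ext i j
    simp [Matrix.conjTranspose_apply, hΔ.apply i j]
  refine Matrix.PosDef.of_dotProduct_mulVec_pos (hA.1.add hΔh) (fun x hx => ?_)
  simp only [star_trivial, Matrix.add_mulVec, dotProduct_add]
  set N := opNorm (A.map (fun a => |a|)) with hN
  set M := opNorm A⁻¹ with hM
  have hN0 : 0 ≤ N := norm_nonneg _
  have hM0 : 0 ≤ M := norm_nonneg _
  have ht : 0 < x ⬝ᵥ x := by
    have := (Matrix.dotProduct_star_self_pos_iff (v := x)).mpr hx
    simpa using this
  -- bound on Δ part
  set y : Fin n → ℝ := fun i => |x i| with hy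
  have hyy : y ⬝ᵥ y = x ⬝ᵥ x := by
    simp [dotProduct, hy, abs_mul_abs_self]
  have hP0 : 0 ≤ y ⬝ᵥ (A.map (fun a => |a|)).mulVec y := by
    simp only [dotProduct, mulVec, Matrix.map_apply]
    apply Finset.sum_nonneg; intro i _
    apply mul_nonneg (abs_nonneg _)
    apply Finset.sum_nonneg; intro j _
    exact mul_nonneg (abs_nonneg _) (abs_nonneg _)
  have hPN : y ⬝ᵥ (A.map (fun a => |a|)).mulVec y ≤ N * (x ⬝ᵥ x) := by
    have := dot_mulVec_le_opNorm (A.map (fun a => |a|)) y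
    rwa [hyy] at this
  have hΔb : |x ⬝ᵥ Δ.mulVec x| ≤ ε * (y ⬝ᵥ (A.map (fun a => |a|)).mulVec y) :=
    quant_abs_dot_le A Δ ε hdom x
  -- lower bound on A part
  have ha : 0 < x ⬝ᵥ A.mulVec x := by
    have := hA.dotProduct_mulVec_pos hx
    simpa using this
  have hAinv : A.mulVec (A⁻¹.mulVec x) = x := by
    rw [Matrix.mulVec_mulVec, Matrix.mul_nonsing_inv _ (isUnit_iff_ne_zero.mpr hA.det_pos.ne'),
      Matrix.one_mulVec]
  set v : Fin n → ℝ := A⁻¹.mulVec x with hv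
  have hCS := psd_cauchy_schwarz hA.posSemidef x v
  rw [hAinv] at hCS
  have hvAv : v ⬝ᵥ x = x ⬝ᵥ A⁻¹.mulVec x := dotProduct_comm _ _
  rw [hvAv] at hCS
  have hMt : x ⬝ᵥ A⁻¹.mulVec x ≤ M * (x ⬝ᵥ x) := dot_mulVec_le_opNorm A⁻¹ x
  -- t^2 ≤ a * (M * t)
  have hkey : (x ⬝ᵥ x) ^ 2 ≤ (x ⬝ᵥ A.mulVec x) * (M * (x ⬝ᵥ x)) :=
    hCS.trans (mul_le_mul_of_nonneg_left hMt ha.le)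
  have htM : x ⬝ᵥ x ≤ (x ⬝ᵥ A.mulVec x) * M := by nlinarith
  -- conclude
  rcases le_or_gt ε 0 with hε | hε
  · have h1 : ε * (y ⬝ᵥ (A.map (fun a => |a|)).mulVec y) ≤ 0 := mul_nonpos_of_nonpos_of_nonneg hε hP0
    have h2 : x ⬝ᵥ Δ.mulVec x = 0 := by
      have := abs_nonneg (x ⬝ᵥ Δ.mulVec x)
      have h3 := hΔb.trans h1
      exact abs_eq_zero.mp (le_antisymm h3 this)
    rw [h2]; linarith
  · have hd : -(ε * (N * (x ⬝ᵥ x))) ≤ x ⬝ᵥ Δ.mulVec x := by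
      have h1 : ε * (y ⬝ᵥ (A.map (fun a => |a|)).mulVec y) ≤ ε * (N * (x ⬝ᵥ x)) :=
        mul_le_mul_of_nonneg_left hPN hε.le
      have h2 := neg_abs_le (x ⬝ᵥ Δ.mulVec x)
      linarith
    have hM1 : 0 < M := by nlinarith
    nlinarith [mul_lt_mul_of_pos_right hκ ht]
end

section
/- (Quantization error bound, Theorem 4.1) Let A be an n×n SPD matrix, b ∈ ℝ^n, and let Δ (symmetric) and δ satisfy |Δ| ≤ ε|A| and |δ| ≤ ε|b| entrywise, with κ̲(A)·ε < 1 where κ̲(A) = ‖|A|‖·‖A^{-1}‖. Then A + Δ is SPD and ‖(A+Δ)^{-1}(b+δ) − A^{-1}b‖_A ≤ φ·ε·‖A^{-1}b‖_A, where φ = (κ̲(A) + κ(A)^{1/2})/(1 − κ̲(A)ε), κ(A) = ‖A‖·‖A^{-1}‖, and ‖x‖_A = ‖A^{1/2}x‖. -/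
open Matrix

lemma vnorm_eq {n : ℕ} (x : Fin n → ℝ) :
    vnorm x = ‖(WithLp.equiv 2 (Fin n → ℝ)).symm x‖ := by
  rw [EuclideanSpace.norm_eq]
  simp [vnorm, Real.norm_eq_abs, sq_abs]

lemma opNorm_nonneg {n m : ℕ} (M : Matrix (Fin n) (Fin m) ℝ) : 0 ≤ opNorm M :=
  norm_nonneg _

lemma vnorm_mulVec_le {n m : ℕ} (M : Matrix (Fin n) (Fin m) ℝ) (x : Fin m → ℝ) :
    vnorm (M *ᵥ x) ≤ opNorm M * vnorm x := by
  rw [vnorm_eq, vnorm_eq]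
  exact (LinearMap.toContinuousLinearMap (Matrix.toEuclideanLin M)).le_opNorm
    ((WithLp.equiv 2 (Fin m → ℝ)).symm x)

lemma opNorm_le {n m : ℕ} (M : Matrix (Fin n) (Fin m) ℝ) (C : ℝ) (hC : 0 ≤ C)
    (h : ∀ x, vnorm (M *ᵥ x) ≤ C * vnorm x) : opNorm M ≤ C := by
  apply ContinuousLinearMap.opNorm_le_bound _ hC
  intro v
  have := h ((WithLp.equiv 2 (Fin m → ℝ)) v)
  rw [vnorm_eq, vnorm_eq] at this
  exact this

lemma dot_eq_inner {n : ℕ} (x y : Fin n → ℝ) :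
    x ⬝ᵥ y = inner ℝ ((WithLp.equiv 2 (Fin n → ℝ)).symm x) ((WithLp.equiv 2 (Fin n → ℝ)).symm y) := by
  simp [dotProduct, PiLp.inner_apply, RCLike.inner_apply, mul_comm]

lemma abs_dot_le {n : ℕ} (x y : Fin n → ℝ) : |x ⬝ᵥ y| ≤ vnorm x * vnorm y := by
  rw [dot_eq_inner, vnorm_eq, vnorm_eq]
  exact abs_real_inner_le_norm _ _

lemma vnorm_sq {n : ℕ} (x : Fin n → ℝ) : x ⬝ᵥ x = vnorm x ^ 2 := by
  rw [vnorm_eq, ← real_inner_self_eq_norm_sq, dot_eq_inner]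

lemma vnorm_nonneg {n : ℕ} (x : Fin n → ℝ) : 0 ≤ vnorm x := Real.sqrt_nonneg _

lemma vnorm_mono {n : ℕ} (u v : Fin n → ℝ) (h : ∀ i, |u i| ≤ |v i|) : vnorm u ≤ vnorm v := by
  apply Real.sqrt_le_sqrt
  apply Finset.sum_le_sum
  intro i _
  rw [← sq_abs (u i), ← sq_abs (v i)]
  exact pow_le_pow_left₀ (abs_nonneg _) (h i) 2

lemma vnorm_abs {n : ℕ} (x : Fin n → ℝ) : vnorm (fun i => |x i|) = vnorm x := by
  simp [vnorm, sq_abs]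

lemma opNorm_dom {n m : ℕ} (M N : Matrix (Fin n) (Fin m) ℝ)
    (h : ∀ i j, |M i j| ≤ N i j) : opNorm M ≤ opNorm N := by
  apply opNorm_le _ _ (opNorm_nonneg N)
  intro x
  calc vnorm (M *ᵥ x) ≤ vnorm (N *ᵥ fun j => |x j|) := by
        apply vnorm_mono
        intro i
        have h1 : |(M *ᵥ x) i| ≤ (N *ᵥ fun j => |x j|) i := by
          simp only [Matrix.mulVec, dotProduct]
          refine (Finset.abs_sum_le_sum_abs _ _).trans (Finset.sum_le_sum fun j _ => ?_)
          rw [abs_mul]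
          exact mul_le_mul_of_nonneg_right (h i j) (abs_nonneg _)
        have h2 : 0 ≤ (N *ᵥ fun j => |x j|) i := by
          simp only [Matrix.mulVec, dotProduct]
          exact Finset.sum_nonneg fun j _ =>
            mul_nonneg ((abs_nonneg (M i j)).trans (h i j)) (abs_nonneg _)
        rw [abs_of_nonneg h2] at *
        exact h1.trans le_rfl
    _ ≤ opNorm N * vnorm (fun j => |x j|) := vnorm_mulVec_le _ _
    _ = opNorm N * vnorm x := by rw [vnorm_abs]

lemma vnorm_triangle {n : ℕ} (x y : Fin n → ℝ) : vnorm (x + y) ≤ vnorm x + vnorm y := by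
  rw [vnorm_eq, vnorm_eq, vnorm_eq]
  rw [show (WithLp.equiv 2 (Fin n → ℝ)).symm (x + y)
      = (WithLp.equiv 2 (Fin n → ℝ)).symm x + (WithLp.equiv 2 (Fin n → ℝ)).symm y from rfl]
  exact norm_add_le _ _

lemma symm_dot {n : ℕ} (S : Matrix (Fin n) (Fin n) ℝ) (hS : S.IsSymm) (x y : Fin n → ℝ) :
    x ⬝ᵥ (S *ᵥ y) = (S *ᵥ x) ⬝ᵥ y := by
  rw [Matrix.dotProduct_mulVec, ← Matrix.mulVec_transpose, hS.eq]

lemma sq_dot {n : ℕ} (S : Matrix (Fin n) (Fin n) ℝ) (hS : S.IsSymm) (x : Fin n → ℝ) :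
    (S *ᵥ x) ⬝ᵥ (S *ᵥ x) = x ⬝ᵥ ((S * S) *ᵥ x) := by
  rw [← Matrix.mulVec_mulVec, symm_dot S hS x (S *ᵥ x)]

lemma opNorm_sqrt_le {n : ℕ} (S M : Matrix (Fin n) (Fin n) ℝ) (hS : S.IsSymm)
    (hSM : S * S = M) : opNorm S ≤ Real.sqrt (opNorm M) := by
  apply opNorm_le _ _ (Real.sqrt_nonneg _)
  intro x
  have h1 : vnorm (S *ᵥ x) ^ 2 ≤ opNorm M * vnorm x ^ 2 := by
    rw [← vnorm_sq, sq_dot S hS, hSM]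
    calc x ⬝ᵥ (M *ᵥ x) ≤ |x ⬝ᵥ (M *ᵥ x)| := le_abs_self _
      _ ≤ vnorm x * vnorm (M *ᵥ x) := abs_dot_le _ _
      _ ≤ vnorm x * (opNorm M * vnorm x) := by
          exact mul_le_mul_of_nonneg_left (vnorm_mulVec_le _ _) (vnorm_nonneg _)
      _ = opNorm M * vnorm x ^ 2 := by ring
  calc vnorm (S *ᵥ x) = Real.sqrt (vnorm (S *ᵥ x) ^ 2) :=
        (Real.sqrt_sq (vnorm_nonneg _)).symm
    _ ≤ Real.sqrt (opNorm M * vnorm x ^ 2) := Real.sqrt_le_sqrt h1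
    _ = Real.sqrt (opNorm M) * vnorm x := by
        rw [Real.sqrt_mul (opNorm_nonneg _), Real.sqrt_sq (vnorm_nonneg _)]

lemma coercive_inv_bound {n : ℕ} (M : Matrix (Fin n) (Fin n) ℝ) (c : ℝ) (hc : 0 < c)
    (hMM : M * M⁻¹ = 1)
    (h : ∀ x, c * vnorm x ^ 2 ≤ x ⬝ᵥ (M *ᵥ x)) (y : Fin n → ℝ) :
    vnorm (M⁻¹ *ᵥ y) ≤ (1 / c) * vnorm y := by
  set z := M⁻¹ *ᵥ y with hz
  have hMz : M *ᵥ z = y := by rw [hz, Matrix.mulVec_mulVec, hMM, Matrix.one_mulVec]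
  have h1 : c * vnorm z ^ 2 ≤ vnorm z * vnorm y := by
    calc c * vnorm z ^ 2 ≤ z ⬝ᵥ (M *ᵥ z) := h z
      _ ≤ |z ⬝ᵥ (M *ᵥ z)| := le_abs_self _
      _ = |z ⬝ᵥ y| := by rw [hMz]
      _ ≤ vnorm z * vnorm y := abs_dot_le _ _
  rcases eq_or_lt_of_le (vnorm_nonneg z) with h0 | h0
  · rw [← h0]
    have := vnorm_nonneg y
    positivity
  · rw [div_mul_eq_mul_div, le_div_iff₀ hc]
    nlinarith

lemma herm_symm {n : ℕ} {M : Matrix (Fin n) (Fin n) ℝ} : M.IsHermitian ↔ M.IsSymm := by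
  unfold Matrix.IsHermitian Matrix.IsSymm
  constructor <;> intro h <;> ext i j <;>
    have := congrFun (congrFun h i) j <;>
    simpa [Matrix.conjTranspose_apply, Matrix.transpose_apply] using this

lemma star_triv {n : ℕ} (x : Fin n → ℝ) : star x = x := by
  ext i; simp

lemma vnorm_pos {n : ℕ} {x : Fin n → ℝ} (hx : x ≠ 0) : 0 < vnorm x := by
  rw [vnorm_eq]
  rw [norm_pos_iff]
  simpa using hx

lemma vnorm_neg {n : ℕ} (x : Fin n → ℝ) : vnorm (-x) = vnorm x := by
  simp [vnorm]

lemma vnorm_sub_le {n : ℕ} (x y : Fin n → ℝ) : vnorm (x - y) ≤ vnorm x + vnorm y := by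
  rw [sub_eq_add_neg]
  exact (vnorm_triangle x (-y)).trans (by rw [vnorm_neg])

lemma opNorm_smul {n m : ℕ} (c : ℝ) (M : Matrix (Fin n) (Fin m) ℝ) :
    opNorm (c • M) = |c| * opNorm M := by
  unfold opNorm
  rw [_root_.map_smul, _root_.map_smul]
  rw [norm_smul c (LinearMap.toContinuousLinearMap (Matrix.toEuclideanLin M)), Real.norm_eq_abs]

lemma vnorm_smul {n : ℕ} (c : ℝ) (x : Fin n → ℝ) : vnorm (c • x) = |c| * vnorm x := by
  unfold vnorm
  simp only [Pi.smul_apply, smul_eq_mul, mul_pow, ← Finset.mul_sum]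
  rw [Real.sqrt_mul (sq_nonneg c), Real.sqrt_sq_eq_abs]

section
open scoped MatrixOrder
lemma exists_sqrt_symm {n : ℕ} {A : Matrix (Fin n) (Fin n) ℝ} (hA : A.PosSemidef) :
    ∃ S : Matrix (Fin n) (Fin n) ℝ, S * S = A ∧ S.IsHermitian :=
  ⟨CFC.sqrt A, CFC.sqrt_mul_sqrt_self A hA.nonneg, (CFC.sqrt_nonneg A).posSemidef.1⟩
end

/-- Theorem 4.1: quantization error bound for the solution, in the
energy norm ‖x‖_A. -/
theorem quantization_error_bound {n : ℕ}
    (A Δ : Matrix (Fin n) (Fin n) ℝ) (b δ : Fin n → ℝ) (ε : ℝ)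
    (hA : A.PosDef) (hΔ : Δ.IsSymm)
    (hΔdom : ∀ i j, |Δ i j| ≤ ε * |A i j|)
    (hδdom : ∀ i, |δ i| ≤ ε * |b i|)
    (hκ : opNorm (A.map (fun a => |a|)) * opNorm A⁻¹ * ε < 1) :
    (A + Δ).PosDef ∧
    enorm A ((A + Δ)⁻¹ *ᵥ (b + δ) - A⁻¹ *ᵥ b) ≤
      ((opNorm (A.map (fun a => |a|)) * opNorm A⁻¹ + Real.sqrt (opNorm A * opNorm A⁻¹)) /
        (1 - opNorm (A.map (fun a => |a|)) * opNorm A⁻¹ * ε)) * ε *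
      enorm A (A⁻¹ *ᵥ b) := by
  rcases Nat.eq_zero_or_pos n with hn | hn
  · subst hn
    refine ⟨Matrix.PosDef.of_dotProduct_mulVec_pos (Subsingleton.elim _ _) fun x hx => absurd (Subsingleton.elim x 0) hx, ?_⟩
    simp [_root_.enorm, dotProduct]
  -- ε ≥ 0
  have hε : 0 ≤ ε := by
    set i0 : Fin n := ⟨0, hn⟩
    have hAii : 0 < A i0 i0 := by
      have h := hA.dotProduct_mulVec_pos (x := Pi.single i0 1) (by
        intro h; have := congrFun h i0; simp [Pi.single_apply] at this)
      rw [star_triv] at h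
      simpa [Matrix.mulVec, dotProduct, Pi.single_apply] using h
    have h1 : (0:ℝ) ≤ ε * |A i0 i0| := (abs_nonneg _).trans (hΔdom i0 i0)
    have h2 : 0 < |A i0 i0| := abs_pos.mpr hAii.ne'
    nlinarith
  set κb := opNorm (A.map (fun a => |a|)) with hκbdef
  set κi := opNorm A⁻¹ with hκidef
  set ρ := κb * κi * ε with hρdef
  have hρ0 : 0 ≤ ρ := mul_nonneg (mul_nonneg (opNorm_nonneg _) (opNorm_nonneg _)) hε
  have hden : 0 < 1 - ρ := by linarith
  -- basic invertibility of A
  have hAdet : IsUnit A.det := isUnit_iff_ne_zero.mpr hA.det_pos.ne'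
  have hAAi : A * A⁻¹ = 1 := Matrix.mul_nonsing_inv A hAdet
  have hAiA : A⁻¹ * A = 1 := Matrix.nonsing_inv_mul A hAdet
  have hAsym : A.IsSymm := herm_symm.mp hA.1
  -- operator norm of Δ
  have hΔn : opNorm Δ ≤ ε * κb := by
    have h1 : opNorm Δ ≤ opNorm (ε • A.map (fun a => |a|)) := by
      apply opNorm_dom
      intro i j
      simpa [Matrix.smul_apply, Matrix.map_apply] using hΔdom i j
    rwa [opNorm_smul, abs_of_nonneg hε] at h1
  -- square root of A
  obtain ⟨S, hSS, hSherm⟩ := exists_sqrt_symm hA.posSemidef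
  have hSsym : S.IsSymm := herm_symm.mp hSherm
  have hSdet : IsUnit S.det := by
    rw [isUnit_iff_ne_zero]
    intro h
    have : A.det = 0 := by rw [← hSS, Matrix.det_mul, h, mul_zero]
    exact hA.det_pos.ne' this
  set T := S⁻¹ with hTdef
  have hST : S * T = 1 := Matrix.mul_nonsing_inv S hSdet
  have hTS : T * S = 1 := Matrix.nonsing_inv_mul S hSdet
  have hTsym : T.IsSymm := by
    rw [Matrix.IsSymm, hTdef, Matrix.transpose_nonsing_inv, hSsym.eq]
  have hTT : T * T = A⁻¹ := by
    rw [hTdef, ← Matrix.mul_inv_rev, hSS]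
  have hSn : opNorm S ≤ Real.sqrt (opNorm A) := opNorm_sqrt_le S A hSsym hSS
  have hTn : opNorm T ≤ Real.sqrt κi := opNorm_sqrt_le T A⁻¹ hTsym hTT
  -- enorm via S
  have henorm : ∀ x, enorm A x = vnorm (S *ᵥ x) := by
    intro x
    rw [_root_.enorm, ← hSS, ← sq_dot S hSsym, vnorm_sq, Real.sqrt_sq (vnorm_nonneg _)]
  -- coercivity of A
  have hAq0 : ∀ x, 0 ≤ x ⬝ᵥ (A *ᵥ x) := by
    intro x
    have := hA.posSemidef.dotProduct_mulVec_nonneg x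
    rwa [star_triv] at this
  have hcoA : ∀ x, vnorm x ^ 2 ≤ κi * (x ⬝ᵥ (A *ᵥ x)) := by
    intro x
    have h1 : vnorm x ≤ Real.sqrt κi * vnorm (S *ᵥ x) := by
      calc vnorm x = vnorm (T *ᵥ (S *ᵥ x)) := by
            rw [Matrix.mulVec_mulVec, hTS, Matrix.one_mulVec]
        _ ≤ opNorm T * vnorm (S *ᵥ x) := vnorm_mulVec_le _ _
        _ ≤ Real.sqrt κi * vnorm (S *ᵥ x) :=
            mul_le_mul_of_nonneg_right hTn (vnorm_nonneg _)
    have h2 : vnorm (S *ᵥ x) ^ 2 = x ⬝ᵥ (A *ᵥ x) := by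
      rw [← vnorm_sq, sq_dot S hSsym, hSS]
    have h3 : vnorm x ^ 2 ≤ (Real.sqrt κi * vnorm (S *ᵥ x)) ^ 2 := by
      apply pow_le_pow_left₀ (vnorm_nonneg _) h1
    calc vnorm x ^ 2 ≤ (Real.sqrt κi * vnorm (S *ᵥ x)) ^ 2 := h3
      _ = κi * (x ⬝ᵥ (A *ᵥ x)) := by
          rw [mul_pow, Real.sq_sqrt (opNorm_nonneg _), h2]
  -- coercivity of A + Δ
  have hcoAD : ∀ x, (1 - ρ) * (x ⬝ᵥ (A *ᵥ x)) ≤ x ⬝ᵥ ((A + Δ) *ᵥ x) := by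
    intro x
    have hsplit : x ⬝ᵥ ((A + Δ) *ᵥ x) = x ⬝ᵥ (A *ᵥ x) + x ⬝ᵥ (Δ *ᵥ x) := by
      rw [Matrix.add_mulVec, dotProduct_add]
    have hΔbd : |x ⬝ᵥ (Δ *ᵥ x)| ≤ ρ * (x ⬝ᵥ (A *ᵥ x)) := by
      calc |x ⬝ᵥ (Δ *ᵥ x)| ≤ vnorm x * vnorm (Δ *ᵥ x) := abs_dot_le _ _
        _ ≤ vnorm x * (opNorm Δ * vnorm x) :=
            mul_le_mul_of_nonneg_left (vnorm_mulVec_le _ _) (vnorm_nonneg _)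
        _ = opNorm Δ * vnorm x ^ 2 := by ring
        _ ≤ (ε * κb) * (κi * (x ⬝ᵥ (A *ᵥ x))) := by
            apply mul_le_mul hΔn (hcoA x) (sq_nonneg _)
              (mul_nonneg hε (opNorm_nonneg _))
        _ = ρ * (x ⬝ᵥ (A *ᵥ x)) := by rw [hρdef]; ring
    have := abs_le.mp hΔbd
    rw [hsplit]
    nlinarith
  -- PosDef of A + Δ
  have hADpos : (A + Δ).PosDef := by
    refine Matrix.PosDef.of_dotProduct_mulVec_pos (herm_symm.mpr ?_) fun x hx => ?_
    · rw [Matrix.IsSymm, Matrix.transpose_add, hAsym.eq, hΔ.eq]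
    · rw [star_triv]
      have h1 : 0 < x ⬝ᵥ (A *ᵥ x) := by
        have := hA.dotProduct_mulVec_pos hx
        rwa [star_triv] at this
      calc (0:ℝ) < (1 - ρ) * (x ⬝ᵥ (A *ᵥ x)) := mul_pos hden h1
        _ ≤ x ⬝ᵥ ((A + Δ) *ᵥ x) := hcoAD x
  refine ⟨hADpos, ?_⟩
  have hADdet : IsUnit (A + Δ).det := isUnit_iff_ne_zero.mpr hADpos.det_pos.ne'
  have hADi : (A + Δ) * (A + Δ)⁻¹ = 1 := Matrix.mul_nonsing_inv _ hADdet
  have hADsym : (A + Δ).IsSymm := herm_symm.mp hADpos.1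
  set x := A⁻¹ *ᵥ b with hxdef
  set xh := (A + Δ)⁻¹ *ᵥ (b + δ) with hxhdef
  set e := xh - x with hedef
  set r := δ - Δ *ᵥ x with hrdef
  have hAx : A *ᵥ x = b := by rw [hxdef, Matrix.mulVec_mulVec, hAAi, Matrix.one_mulVec]
  have hre : (A + Δ) *ᵥ e = r := by
    rw [hedef, Matrix.mulVec_sub, hxhdef, Matrix.mulVec_mulVec, hADi, Matrix.one_mulVec,
        Matrix.add_mulVec, hAx, hrdef]
    abel
  set B := T * (A + Δ) * T with hBdef
  have hBapp : ∀ z, B *ᵥ z = T *ᵥ ((A + Δ) *ᵥ (T *ᵥ z)) := by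
    intro z
    rw [Matrix.mulVec_mulVec, Matrix.mulVec_mulVec, hBdef]
  have hcoB : ∀ z, (1 - ρ) * vnorm z ^ 2 ≤ z ⬝ᵥ (B *ᵥ z) := by
    intro z
    have h1 : z ⬝ᵥ (B *ᵥ z) = (T *ᵥ z) ⬝ᵥ ((A + Δ) *ᵥ (T *ᵥ z)) := by
      rw [hBapp, symm_dot T hTsym]
    have h2 : (T *ᵥ z) ⬝ᵥ (A *ᵥ (T *ᵥ z)) = vnorm z ^ 2 := by
      rw [← hSS, ← sq_dot S hSsym, Matrix.mulVec_mulVec, hST, Matrix.one_mulVec, vnorm_sq]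
    have h3 := hcoAD (T *ᵥ z)
    rw [h2] at h3
    rw [h1]
    exact h3
  have hBpos : B.PosDef := by
    refine Matrix.PosDef.of_dotProduct_mulVec_pos (herm_symm.mpr ?_) fun z hz => ?_
    · rw [hBdef, Matrix.IsSymm, Matrix.transpose_mul, Matrix.transpose_mul,
          hTsym.eq, hADsym.eq, Matrix.mul_assoc]
    · rw [star_triv]
      calc (0:ℝ) < (1 - ρ) * vnorm z ^ 2 := by
            have := vnorm_pos hz; positivity
        _ ≤ z ⬝ᵥ (B *ᵥ z) := hcoB z
  have hBdet : IsUnit B.det := isUnit_iff_ne_zero.mpr hBpos.det_pos.ne'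
  have hBBi : B * B⁻¹ = 1 := Matrix.mul_nonsing_inv _ hBdet
  have hBiB : B⁻¹ * B = 1 := Matrix.nonsing_inv_mul _ hBdet
  have hBu : B *ᵥ (S *ᵥ e) = T *ᵥ r := by
    rw [hBapp, Matrix.mulVec_mulVec e T S, hTS, Matrix.one_mulVec, hre]
  have hSe : S *ᵥ e = B⁻¹ *ᵥ (T *ᵥ r) := by
    rw [← hBu, Matrix.mulVec_mulVec, hBiB, Matrix.one_mulVec]
  set E := vnorm (S *ᵥ x) with hEdef
  have hE0 : 0 ≤ E := vnorm_nonneg _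
  have hbE : vnorm b ≤ Real.sqrt (opNorm A) * E := by
    calc vnorm b = vnorm (S *ᵥ (S *ᵥ x)) := by
          rw [Matrix.mulVec_mulVec, hSS, hAx]
      _ ≤ opNorm S * E := vnorm_mulVec_le _ _
      _ ≤ Real.sqrt (opNorm A) * E := mul_le_mul_of_nonneg_right hSn hE0
  have hxE : vnorm x ≤ Real.sqrt κi * E := by
    calc vnorm x = vnorm (T *ᵥ (S *ᵥ x)) := by
          rw [Matrix.mulVec_mulVec, hTS, Matrix.one_mulVec]
      _ ≤ opNorm T * E := vnorm_mulVec_le _ _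
      _ ≤ Real.sqrt κi * E := mul_le_mul_of_nonneg_right hTn hE0
  have hδb : vnorm δ ≤ ε * vnorm b := by
    have h1 : vnorm δ ≤ vnorm (ε • b) := by
      apply vnorm_mono
      intro i
      rw [Pi.smul_apply, smul_eq_mul, abs_mul, abs_of_nonneg hε]
      exact hδdom i
    rwa [vnorm_smul, abs_of_nonneg hε] at h1
  have t1 : vnorm (T *ᵥ δ) ≤ Real.sqrt κi * (ε * (Real.sqrt (opNorm A) * E)) := by
    refine (vnorm_mulVec_le _ _).trans ?_
    refine mul_le_mul hTn (hδb.trans ?_) (vnorm_nonneg _) (Real.sqrt_nonneg _)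
    exact mul_le_mul_of_nonneg_left hbE hε
  have t2 : vnorm (T *ᵥ (Δ *ᵥ x)) ≤ Real.sqrt κi * ((ε * κb) * (Real.sqrt κi * E)) := by
    refine (vnorm_mulVec_le _ _).trans ?_
    refine mul_le_mul hTn ?_ (vnorm_nonneg _) (Real.sqrt_nonneg _)
    refine (vnorm_mulVec_le _ _).trans ?_
    exact mul_le_mul hΔn hxE (vnorm_nonneg _) (mul_nonneg hε (opNorm_nonneg _))
  have hTr : vnorm (T *ᵥ r) ≤ ε * Real.sqrt (opNorm A * κi) * E + ρ * E := by
    have hsplit : T *ᵥ r = T *ᵥ δ - T *ᵥ (Δ *ᵥ x) := by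
      rw [hrdef, Matrix.mulVec_sub]
    have h := (hsplit ▸ vnorm_sub_le (T *ᵥ δ) (T *ᵥ (Δ *ᵥ x))).trans (add_le_add t1 t2)
    have hs1 : Real.sqrt κi * (ε * (Real.sqrt (opNorm A) * E))
        = ε * Real.sqrt (opNorm A * κi) * E := by
      rw [Real.sqrt_mul (opNorm_nonneg _)]
      ring
    have hs2 : Real.sqrt κi * ((ε * κb) * (Real.sqrt κi * E)) = ρ * E := by
      have hss : Real.sqrt κi * Real.sqrt κi = κi :=
        Real.mul_self_sqrt (by rw [hκidef]; exact opNorm_nonneg _)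
      linear_combination (ε * κb * E) * hss - E * hρdef
    rw [hs1, hs2] at h
    exact h
  have hmain : vnorm (S *ᵥ e) ≤ (1 / (1 - ρ)) * (ε * Real.sqrt (opNorm A * κi) * E + ρ * E) := by
    rw [hSe]
    refine (coercive_inv_bound B (1 - ρ) hden hBBi hcoB (T *ᵥ r)).trans ?_
    exact mul_le_mul_of_nonneg_left hTr (by positivity)
  rw [henorm, henorm]
  have hne : (1:ℝ) - κb * κi * ε ≠ 0 := by rw [← hρdef]; linarith
  have heq : (1:ℝ) / (1 - ρ) * (ε * Real.sqrt (opNorm A * κi) * E + ρ * E)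
      = (κb * κi + Real.sqrt (opNorm A * κi)) / (1 - ρ) * ε * E := by
    rw [hρdef]
    field_simp
    ring
  exact hmain.trans (le_of_eq heq)
end
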